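/- Let A ⊆ ℕ be a WM set and let Z ⊆ ℕ have density zero (lim_{N→∞} (1/N)|Z ∩ [1,N]| = 0). Then A \ Z is a WM set, and d(A \ Z) = d(A). -/

import Mathlib

open MeasureTheory Filter Topology Polynomial

/-- The space `Ω = {0,1}^ℕ`. -/
abbrev Omega : Type := ℕ → Bool

/-- The shift map `(Tω)ₙ = ω_{n+1}`. -/
def shift : Omega → Omega := fun ω n => ω (n + 1)

open Classical in
/-- The indicator sequence `ξ = 1_S ∈ Ω` of a set `S ⊆ ℕ`. -/
noncomputable def indicatorSeq (S : Set ℕ) : Omega := fun n => decide (n ∈ S)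

/-- The orbit closure `X_ξ` of a point `ξ ∈ Ω` under the shift. -/
def orbitClosure (ξ : Omega) : Set Omega := closure {ω | ∃ n : ℕ, shift^[n] ξ = ω}

open Classical in
/-- The number of elements of `S` in the interval `[a, b]`. -/
noncomputable def countIn (S : Set ℕ) (a b : ℕ) : ℕ :=
  ((Finset.Icc a b).filter (fun n => n ∈ S)).card

/-- `S ⊆ ℕ` has density `δ`: `(1/N)|S ∩ [1,N]| → δ`. -/
def HasDensity (S : Set ℕ) (δ : ℝ) : Prop :=
  Tendsto (fun N : ℕ => (countIn S 1 N : ℝ) / N) atTop (𝓝 δ)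

/-- The upper density of `S ⊆ ℕ`: `limsup (1/N)|S ∩ [1,N]|`. -/
noncomputable def upperDensity (S : Set ℕ) : ℝ :=
  limsup (fun N : ℕ => (countIn S 1 N : ℝ) / N) atTop

/-- `ξ` is a generic point for the measure `μ`: Birkhoff averages of every continuous
function converge to the integral. -/
def IsGeneric (ξ : Omega) (μ : Measure Omega) : Prop :=
  ∀ f : C(Omega, ℝ),
    Tendsto (fun N : ℕ => (∑ n ∈ Finset.range N, f (shift^[n] ξ)) / N) atTop
      (𝓝 (∫ x, f x ∂μ))

/-- `A ⊆ ℕ` is a WM set: it has positive density and `1_A` is generic for a shift-invariant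
Borel probability measure `μ` supported on the orbit closure `X_{1_A}` such that the
product system `(X × X, μ × μ, T × T)` is ergodic (weak mixing). -/
def IsWMSet (A : Set ℕ) : Prop :=
  (∃ δ : ℝ, 0 < δ ∧ HasDensity A δ) ∧
  ∃ (μ : Measure Omega) (_ : IsProbabilityMeasure μ),
    μ (orbitClosure (indicatorSeq A)) = 1 ∧
    IsGeneric (indicatorSeq A) μ ∧
    Ergodic (fun x : Omega × Omega => (shift x.1, shift x.2)) (μ.prod μ)

/-! ### Auxiliary lemmas -/

lemma countIn_sdiff_le (A Z : Set ℕ) (N : ℕ) : countIn (A \ Z) 1 N ≤ countIn A 1 N := by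
  classical
  simp only [countIn, Finset.filter_congr_decidable]
  apply Finset.card_le_card
  intro n hn
  simp only [Finset.mem_filter] at hn ⊢
  exact ⟨hn.1, hn.2.1⟩

lemma countIn_le_sdiff_add (A Z : Set ℕ) (N : ℕ) :
    countIn A 1 N ≤ countIn (A \ Z) 1 N + countIn Z 1 N := by
  classical
  have h1 : (Finset.Icc 1 N).filter (fun n => n ∈ A) ⊆
      ((Finset.Icc 1 N).filter (fun n => n ∈ A \ Z)) ∪
      ((Finset.Icc 1 N).filter (fun n => n ∈ Z)) := ?_
  · have h2 := (Finset.card_le_card h1).trans (Finset.card_union_le _ _)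
    simpa [countIn, Finset.filter_congr_decidable] using h2
  intro n hn
  simp only [Finset.mem_filter, Finset.mem_union, Set.mem_diff] at hn ⊢
  by_cases h : n ∈ Z
  · exact Or.inr ⟨hn.1, h⟩
  · exact Or.inl ⟨hn.1, hn.2, h⟩

lemma hasDensity_sdiff {A Z : Set ℕ} {δ : ℝ} (hA : HasDensity A δ) (hZ : HasDensity Z 0) :
    HasDensity (A \ Z) δ := by
  have hlow : Tendsto (fun N : ℕ => (countIn A 1 N : ℝ) / N - (countIn Z 1 N : ℝ) / N)
      atTop (𝓝 δ) := by
    simpa using hA.sub hZ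
  refine tendsto_of_tendsto_of_tendsto_of_le_of_le' hlow hA ?_ ?_
  · filter_upwards [eventually_ge_atTop 1] with N hN
    have hNpos : (0:ℝ) < N := by exact_mod_cast hN
    rw [div_sub_div_same, div_le_div_iff_of_pos_right hNpos]
    have := countIn_le_sdiff_add A Z N
    have : (countIn A 1 N : ℝ) ≤ (countIn (A \ Z) 1 N : ℝ) + (countIn Z 1 N : ℝ) := by
      exact_mod_cast this
    linarith
  · filter_upwards [eventually_ge_atTop 1] with N hN
    have hNpos : (0:ℝ) < N := by exact_mod_cast hN
    rw [div_le_div_iff_of_pos_right hNpos]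
    exact_mod_cast countIn_sdiff_le A Z N

open Classical in
/-- The number of elements of `S` in `[0, N)`. -/
noncomputable def cntR (S : Set ℕ) (N : ℕ) : ℕ :=
  ((Finset.range N).filter (fun n => n ∈ S)).card

lemma cntR_le_countIn (S : Set ℕ) (N : ℕ) : cntR S N ≤ countIn S 1 N + 1 := by
  classical
  have hsub : ((Finset.range N).filter (fun n => n ∈ S)) ⊆
      insert 0 ((Finset.Icc 1 N).filter (fun n => n ∈ S)) := by
    intro n hn
    simp only [Finset.mem_filter, Finset.mem_range] at hn
    rcases Nat.eq_zero_or_pos n with h0 | h0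
    · simp [h0]
    · exact Finset.mem_insert_of_mem (by
        simp only [Finset.mem_filter, Finset.mem_Icc]
        exact ⟨⟨h0, le_of_lt hn.1⟩, hn.2⟩)
  have := (Finset.card_le_card hsub).trans (Finset.card_insert_le _ _)
  simpa [cntR, countIn, Finset.filter_congr_decidable] using this

lemma cntR_shift_le (Z : Set ℕ) (k N : ℕ) : cntR {n | n + k ∈ Z} N ≤ cntR Z (N + k) := by
  classical
  have := Finset.card_le_card_of_injOn (fun n => n + k)
    (s := (Finset.range N).filter (fun n => n + k ∈ Z))
    (t := (Finset.range (N + k)).filter (fun n => n ∈ Z))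
    (by
      intro n hn
      simp only [Finset.mem_coe, Finset.mem_filter, Finset.mem_range] at hn ⊢
      exact ⟨by omega, hn.2⟩)
    (fun a _ b _ h => by simpa using h)
  simpa [cntR, Finset.filter_congr_decidable] using this

lemma tendsto_cntR_shift (Z : Set ℕ) (hZ : HasDensity Z 0) (k : ℕ) :
    Tendsto (fun N : ℕ => (cntR {n | n + k ∈ Z} N : ℝ) / N) atTop (𝓝 0) := by
  have h1 : Tendsto (fun N : ℕ => (countIn Z 1 (N + k) : ℝ) / ((N : ℝ) + k)) atTop (𝓝 0) := by
    have := hZ.comp (tendsto_add_atTop_nat k)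
    simpa [Function.comp_def] using this
  have h2 : Tendsto (fun N : ℕ => ((N : ℝ) + k) / N) atTop (𝓝 1) := by
    have hk : Tendsto (fun N : ℕ => (k : ℝ) / N) atTop (𝓝 0) :=
      tendsto_const_div_atTop_nhds_zero_nat (k : ℝ)
    refine Tendsto.congr' ?_ (by simpa using tendsto_const_nhds.add hk :
      Tendsto (fun N : ℕ => 1 + (k : ℝ) / N) atTop (𝓝 1))
    filter_upwards [eventually_ge_atTop 1] with N hN
    have hN0 : (N : ℝ) ≠ 0 := by positivity
    field_simp
  have hu : Tendsto (fun N : ℕ => ((countIn Z 1 (N + k) : ℝ) + 1) / N) atTop (𝓝 0) := by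
    have h3 : Tendsto (fun N : ℕ =>
        ((countIn Z 1 (N + k) : ℝ) / ((N : ℝ) + k)) * (((N : ℝ) + k) / N) + 1 / N)
        atTop (𝓝 (0 * 1 + 0)) :=
      (h1.mul h2).add tendsto_one_div_atTop_nhds_zero_nat
    refine Tendsto.congr' ?_ (by simpa using h3)
    filter_upwards [eventually_ge_atTop 1] with N hN
    have hN0 : (N : ℝ) ≠ 0 := by positivity
    have hNk : (N : ℝ) + k ≠ 0 := by positivity
    field_simp
  refine tendsto_of_tendsto_of_tendsto_of_le_of_le' tendsto_const_nhds hu ?_ ?_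
  · filter_upwards with N; positivity
  · filter_upwards [eventually_ge_atTop 1] with N hN
    have hNpos : (0 : ℝ) < N := by exact_mod_cast hN
    rw [div_le_div_iff_of_pos_right hNpos]
    exact_mod_cast (cntR_shift_le Z k N).trans (cntR_le_countIn Z (N + k))

lemma cntR_subset_le {S T : Set ℕ} (h : S ⊆ T) (N : ℕ) : cntR S N ≤ cntR T N := by
  classical
  have hsub : (Finset.range N).filter (fun n => n ∈ S) ⊆
      (Finset.range N).filter (fun n => n ∈ T) := by
    intro n hn
    simp only [Finset.mem_filter] at hn ⊢
    exact ⟨hn.1, h hn.2⟩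
  have := Finset.card_le_card hsub
  simpa [cntR, Finset.filter_congr_decidable] using this

lemma cntR_union_le (S T : Set ℕ) (N : ℕ) : cntR (S ∪ T) N ≤ cntR S N + cntR T N := by
  classical
  have hsub : (Finset.range N).filter (fun n => n ∈ S ∪ T) ⊆
      ((Finset.range N).filter (fun n => n ∈ S)) ∪
      ((Finset.range N).filter (fun n => n ∈ T)) := by
    intro n hn
    simp only [Finset.mem_filter, Finset.mem_union, Set.mem_union] at hn ⊢
    tauto
  have := (Finset.card_le_card hsub).trans (Finset.card_union_le _ _)
  simpa [cntR, Finset.filter_congr_decidable] using this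

lemma cntR_bad_le (Z : Set ℕ) (m N : ℕ) :
    cntR {n | ∃ k < m, n + k ∈ Z} N ≤ ∑ k ∈ Finset.range m, cntR {n | n + k ∈ Z} N := by
  classical
  induction m with
  | zero =>
      simp only [Finset.range_zero, Finset.sum_empty, Nat.le_zero]
      unfold cntR
      simp only [Finset.card_eq_zero, Finset.filter_eq_empty_iff]
      intro x _
      simp
  | succ m ih =>
      have hset : {n : ℕ | ∃ k < m + 1, n + k ∈ Z} ⊆
          {n : ℕ | ∃ k < m, n + k ∈ Z} ∪ {n : ℕ | n + m ∈ Z} := by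
        intro n hn
        obtain ⟨k, hk, hkZ⟩ := hn
        rcases Nat.lt_succ_iff_lt_or_eq.mp hk with h | h
        · exact Or.inl ⟨k, h, hkZ⟩
        · exact Or.inr (by rw [← h]; exact hkZ)
      calc cntR {n | ∃ k < m + 1, n + k ∈ Z} N
          ≤ cntR ({n : ℕ | ∃ k < m, n + k ∈ Z} ∪ {n : ℕ | n + m ∈ Z}) N :=
            cntR_subset_le hset N
        _ ≤ cntR {n : ℕ | ∃ k < m, n + k ∈ Z} N + cntR {n : ℕ | n + m ∈ Z} N :=
            cntR_union_le _ _ N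
        _ ≤ _ := by
            rw [Finset.sum_range_succ]
            exact Nat.add_le_add_right ih _

lemma tendsto_cntR_bad (Z : Set ℕ) (hZ : HasDensity Z 0) (m : ℕ) :
    Tendsto (fun N : ℕ => (cntR {n | ∃ k < m, n + k ∈ Z} N : ℝ) / N) atTop (𝓝 0) := by
  classical
  have hsum : Tendsto (fun N : ℕ =>
      ∑ k ∈ Finset.range m, (cntR {n | n + k ∈ Z} N : ℝ) / N) atTop (𝓝 0) := by
    have := tendsto_finset_sum (Finset.range m)
      (fun (k : ℕ) (_ : k ∈ Finset.range m) => tendsto_cntR_shift Z hZ k)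
    simpa using this
  refine tendsto_of_tendsto_of_tendsto_of_le_of_le' tendsto_const_nhds hsum ?_ ?_
  · filter_upwards with N; positivity
  · filter_upwards with N
    have hc : (cntR {n | ∃ k < m, n + k ∈ Z} N : ℝ) ≤
        ∑ k ∈ Finset.range m, (cntR {n | n + k ∈ Z} N : ℝ) := by
      exact_mod_cast cntR_bad_le Z m N
    rw [← Finset.sum_div]
    rcases Nat.eq_zero_or_pos N with h0 | h0
    · simp [h0]
    · have hNpos : (0 : ℝ) < N := by exact_mod_cast h0
      rw [div_le_div_iff_of_pos_right hNpos]
      exact hc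

lemma shift_iterate (ω : Omega) (n i : ℕ) : (shift^[n] ω) i = ω (n + i) := by
  induction n generalizing i with
  | zero => simp
  | succ n ih =>
      rw [Function.iterate_succ_apply']
      show (shift^[n] ω) (i + 1) = ω (n + 1 + i)
      rw [ih]
      ring_nf

lemma exists_modulus (f : C(Omega, ℝ)) {ε : ℝ} (hε : 0 < ε) :
    ∃ m : ℕ, ∀ x y : Omega, (∀ i < m, x i = y i) → |f x - f y| < ε := by
  have H : ∀ x : Omega, ∃ m : ℕ, ∀ y : Omega, (∀ i < m, y i = x i) →
      dist (f y) (f x) < ε / 2 := by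
    intro x
    have hball : f ⁻¹' Metric.ball (f x) (ε / 2) ∈ 𝓝 x :=
      f.continuous.continuousAt (Metric.ball_mem_nhds _ (by positivity))
    rw [nhds_pi, Filter.mem_pi] at hball
    obtain ⟨I, hIfin, t, ht, hsub⟩ := hball
    obtain ⟨b, hb⟩ := hIfin.bddAbove
    refine ⟨b + 1, fun y hy => ?_⟩
    have hyI : y ∈ I.pi t := by
      intro i hiI
      rw [hy i (Nat.lt_succ_of_le (hb hiI))]
      exact mem_of_mem_nhds (ht i)
    exact Metric.mem_ball.mp (hsub hyI)
  choose m hm using H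
  set V : Omega → Set Omega := fun x => {y | ∀ i < m x, y i = x i} with hV
  have hVopen : ∀ x, IsOpen (V x) := by
    intro x
    have : V x = ⋂ i ∈ Finset.range (m x), (fun y : Omega => y i) ⁻¹' {x i} := by
      ext y
      simp [hV]
    rw [this]
    exact isOpen_biInter_finset fun i _ =>
      (continuous_apply i).isOpen_preimage _ (isOpen_discrete _)
  have hcover : (Set.univ : Set Omega) ⊆ ⋃ x, V x := by
    intro x _
    exact Set.mem_iUnion.mpr ⟨x, fun i _ => rfl⟩
  obtain ⟨s, hs⟩ := isCompact_univ.elim_finite_subcover V hVopen hcover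
  refine ⟨s.sup m, fun x y hxy => ?_⟩
  obtain ⟨z, hzs, hxz⟩ : ∃ z ∈ s, x ∈ V z := by
    have := hs (Set.mem_univ x)
    simpa using this
  have hyz : y ∈ V z := by
    intro i hi
    rw [← hxy i (lt_of_lt_of_le hi (Finset.le_sup hzs))]
    exact hxz i hi
  have d1 : dist (f x) (f z) < ε / 2 := hm z x hxz
  have d2 : dist (f y) (f z) < ε / 2 := hm z y hyz
  have : dist (f x) (f y) < ε := by
    calc dist (f x) (f y) ≤ dist (f x) (f z) + dist (f y) (f z) := dist_triangle_right _ _ _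
      _ < ε := by linarith
  simpa [Real.dist_eq] using this

lemma indicator_agree {A Z : Set ℕ} {j : ℕ} (hj : j ∉ Z) :
    indicatorSeq (A \ Z) j = indicatorSeq A j := by
  simp only [indicatorSeq]
  refine decide_eq_decide.mpr ?_
  simp [Set.mem_diff, hj]

lemma avg_diff_tendsto_zero (A Z : Set ℕ) (hZ : HasDensity Z 0) (f : C(Omega, ℝ)) :
    Tendsto (fun N : ℕ =>
      (∑ n ∈ Finset.range N, f (shift^[n] (indicatorSeq (A \ Z)))) / N
      - (∑ n ∈ Finset.range N, f (shift^[n] (indicatorSeq A))) / N) atTop (𝓝 0) := by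
  classical
  set ξ := indicatorSeq A with hξ
  set ξ' := indicatorSeq (A \ Z) with hξ'
  rw [NormedAddCommGroup.tendsto_nhds_zero]
  intro ε hε
  obtain ⟨m, hm⟩ := exists_modulus f (show (0:ℝ) < ε/4 by positivity)
  set B : Set ℕ := {n | ∃ k < m, n + k ∈ Z} with hB
  have hBzero := tendsto_cntR_bad Z hZ m
  have hCont : ∀ᶠ N in atTop, 2 * ‖f‖ * ((cntR B N : ℝ)/N) < ε/4 := by
    have h0 : Tendsto (fun N : ℕ => 2 * ‖f‖ * ((cntR B N : ℝ)/N)) atTop (𝓝 (2 * ‖f‖ * 0)) :=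
      hBzero.const_mul _
    rw [mul_zero] at h0
    exact h0.eventually (gt_mem_nhds (by positivity))
  filter_upwards [hCont, eventually_ge_atTop 1] with N hN1 hN2
  have hNpos : (0:ℝ) < N := by exact_mod_cast hN2
  have hterm : ∀ n : ℕ, ‖f (shift^[n] ξ') - f (shift^[n] ξ)‖ ≤
      if n ∈ B then 2 * ‖f‖ else ε/4 := by
    intro n
    by_cases hnB : n ∈ B
    · rw [if_pos hnB]
      calc ‖f (shift^[n] ξ') - f (shift^[n] ξ)‖
          ≤ ‖f (shift^[n] ξ')‖ + ‖f (shift^[n] ξ)‖ := norm_sub_le _ _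
        _ ≤ ‖f‖ + ‖f‖ := add_le_add (f.norm_coe_le_norm _) (f.norm_coe_le_norm _)
        _ = 2 * ‖f‖ := by ring
    · rw [if_neg hnB]
      have hag : ∀ i < m, (shift^[n] ξ') i = (shift^[n] ξ) i := by
        intro i hi
        rw [shift_iterate, shift_iterate]
        exact indicator_agree (fun h => hnB ⟨i, hi, h⟩)
      have := hm _ _ hag
      rw [Real.norm_eq_abs]
      linarith [abs_nonneg (f (shift^[n] ξ') - f (shift^[n] ξ))]
  have hsum : ‖∑ n ∈ Finset.range N, (f (shift^[n] ξ') - f (shift^[n] ξ))‖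
      ≤ 2 * ‖f‖ * (cntR B N : ℝ) + (ε/4) * N := by
    calc ‖∑ n ∈ Finset.range N, (f (shift^[n] ξ') - f (shift^[n] ξ))‖
        ≤ ∑ n ∈ Finset.range N, ‖f (shift^[n] ξ') - f (shift^[n] ξ)‖ := norm_sum_le _ _
      _ ≤ ∑ n ∈ Finset.range N, (if n ∈ B then 2 * ‖f‖ else ε/4) :=
          Finset.sum_le_sum (fun n _ => hterm n)
      _ = 2 * ‖f‖ * (((Finset.range N).filter (fun n => n ∈ B)).card : ℝ)
          + (ε/4) * (((Finset.range N).filter (fun n => ¬ n ∈ B)).card : ℝ) := by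
          rw [Finset.sum_ite]
          simp [Finset.sum_const, nsmul_eq_mul]
          ring
      _ ≤ 2 * ‖f‖ * (cntR B N : ℝ) + (ε/4) * N := by
          have e1 : ((Finset.range N).filter (fun n => n ∈ B)).card = cntR B N := by
            unfold cntR
            congr
          have e2 : (((Finset.range N).filter (fun n => ¬ n ∈ B)).card : ℝ) ≤ N := by
            exact_mod_cast (Finset.card_filter_le _ _).trans (le_of_eq (Finset.card_range N))
          rw [e1]
          have : (0:ℝ) ≤ ε/4 := by positivity
          nlinarith
  have hdiff : (∑ n ∈ Finset.range N, f (shift^[n] ξ')) / N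
      - (∑ n ∈ Finset.range N, f (shift^[n] ξ)) / N
      = (∑ n ∈ Finset.range N, (f (shift^[n] ξ') - f (shift^[n] ξ))) / N := by
    rw [Finset.sum_sub_distrib, sub_div]
  rw [hdiff, norm_div, Real.norm_natCast]
  have hN0 : (N:ℝ) ≠ 0 := ne_of_gt hNpos
  have hle : ‖∑ n ∈ Finset.range N, (f (shift^[n] ξ') - f (shift^[n] ξ))‖ / N
      ≤ 2 * ‖f‖ * ((cntR B N : ℝ)/N) + ε/4 := by
    rw [div_le_iff₀ hNpos]
    calc ‖∑ n ∈ Finset.range N, (f (shift^[n] ξ') - f (shift^[n] ξ))‖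
        ≤ 2 * ‖f‖ * (cntR B N : ℝ) + (ε/4) * N := hsum
      _ = (2 * ‖f‖ * ((cntR B N : ℝ)/N) + ε/4) * N := by field_simp
  calc ‖∑ n ∈ Finset.range N, (f (shift^[n] ξ') - f (shift^[n] ξ))‖ / N
      ≤ 2 * ‖f‖ * ((cntR B N : ℝ)/N) + ε/4 := hle
    _ < ε/4 + ε/4 := by linarith
    _ < ε := by linarith

lemma isGeneric_of_density_zero {A Z : Set ℕ} (hZ : HasDensity Z 0)
    {μ : Measure Omega} (hgen : IsGeneric (indicatorSeq A) μ) :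
    IsGeneric (indicatorSeq (A \ Z)) μ := by
  intro f
  have h1 := hgen f
  have h2 := avg_diff_tendsto_zero A Z hZ f
  have := h1.add h2
  rw [add_zero] at this
  refine this.congr (fun N => ?_)
  ring

lemma generic_support {μ : Measure Omega} [IsProbabilityMeasure μ] {ξ : Omega}
    (hgen : IsGeneric ξ μ) : μ (orbitClosure ξ) = 1 := by
  set C : Set Omega := orbitClosure ξ with hC
  have hCc : IsClosed C := isClosed_closure
  by_contra hne
  have hlt : μ Cᶜ ≠ 0 := by
    intro h0
    apply hne
    have := prob_compl_eq_zero_iff (μ := μ) (s := C) hCc.measurableSet |>.mp h0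
    exact this
  obtain ⟨K, hKsub, hKcomp, hKlt⟩ :=
    (hCc.isOpen_compl.measurableSet).exists_isCompact_lt_add (measure_ne_top μ _) hlt
  have hKpos : μ K ≠ 0 := by
    intro h0
    rw [h0, zero_add] at hKlt
    exact lt_irrefl _ hKlt
  obtain ⟨g, hg1, hg0, hgsupp, hgIcc⟩ :=
    exists_continuous_one_zero_of_isCompact hKcomp hCc
      (Set.disjoint_left.mpr (fun x hx => hKsub hx))
  have hzero : ∀ n : ℕ, g (shift^[n] ξ) = 0 := by
    intro n
    exact hg0 (subset_closure ⟨n, rfl⟩)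
  have h1 := hgen g
  have h2 : Tendsto (fun N : ℕ => (∑ n ∈ Finset.range N, g (shift^[n] ξ)) / N)
      atTop (𝓝 0) := by
    have : (fun N : ℕ => (∑ n ∈ Finset.range N, g (shift^[n] ξ)) / N) = fun _ => 0 := by
      funext N
      simp [hzero]
    rw [this]
    exact tendsto_const_nhds
  have hint : ∫ x, g x ∂μ = 0 := tendsto_nhds_unique h1 h2
  have hginteg : Integrable g μ :=
    g.continuous.integrable_of_hasCompactSupport hgsupp
  have hKmeas : MeasurableSet K := hKcomp.isClosed.measurableSet
  have hlow : (μ K).toReal ≤ ∫ x, g x ∂μ := by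
    have e1 : ∫ x in K, g x ∂μ = (μ K).toReal := by
      rw [setIntegral_congr_fun hKmeas (fun x hx => hg1 hx)]
      simp [Measure.restrict_apply, MeasurableSet.univ]
      rfl
    calc (μ K).toReal = ∫ x in K, g x ∂μ := e1.symm
      _ ≤ ∫ x, g x ∂μ := setIntegral_le_integral hginteg
          (Filter.Eventually.of_forall (fun x => (hgIcc x).1))
  rw [hint] at hlow
  have : 0 < (μ K).toReal := ENNReal.toReal_pos hKpos (measure_ne_top μ K)
  linarith

/-- Removing a set of density zero from a WM set yields a WM set with the same density. -/
theorem WM_sdiff_density_zero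
    (A Z : Set ℕ) (hA : IsWMSet A) (hZ : HasDensity Z 0) :
    IsWMSet (A \ Z) ∧ ∀ δ : ℝ, HasDensity A δ → HasDensity (A \ Z) δ := by
  obtain ⟨⟨δ, hδpos, hδ⟩, μ, hprob, hsupp, hgen, herg⟩ := hA
  refine ⟨⟨⟨δ, hδpos, hasDensity_sdiff hδ hZ⟩, μ, hprob, ?_, ?_, herg⟩,
    fun δ' hδ' => hasDensity_sdiff hδ' hZ⟩
  · have := isGeneric_of_density_zero hZ hgen
    exact generic_support this
  · exact isGeneric_of_density_zero hZ hgen
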